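/- If every negative edge of the prefix graph of a feasible array y joins vertices in distinct connected components of the positive subgraph P⁺, then the regular string x defined by assigning to each connected component C of P⁺ a unique letter λ_C, with x[i] = λ_C for i ∈ C, has prefix table equal to y. -/

import Mathlib

/-- `x[i..i+ℓ-1]` matches the prefix `x[1..ℓ]` of `x[1..n]` position-wise.  -/
def MatchPref {α : Type*} (x : ℕ → Finset α) (n i ℓ : ℕ) : Prop :=
  i + ℓ ≤ n + 1 ∧ ∀ h, h < ℓ → ∃ a, a ∈ x (1 + h) ∧ a ∈ x (i + h)

/-- `y` is the prefix table of the (1-indexed) string `x[1..n]`: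
for each `i ∈ 1..n`, `y i` is the length of the longest prefix of `x[i..n]`
matching a prefix of `x`. -/
def IsPrefixTable {α : Type*} (x : ℕ → Finset α) (n : ℕ) (y : ℕ → ℕ) : Prop :=
  ∀ i, 1 ≤ i → i ≤ n → MatchPref x n i (y i) ∧ ∀ ℓ, MatchPref x n i ℓ → ℓ ≤ y i

/-- A feasible array `y[1..n]`. -/
def Feasible (y : ℕ → ℕ) (n : ℕ) : Prop :=
  y 1 = n ∧ ∀ i, 2 ≤ i → i ≤ n → y i ≤ n - i + 1

/-- Positive edges of the prefix graph of `y[1..n]`. -/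
def posEdges (y : ℕ → ℕ) (n : ℕ) : Finset (Sym2 ℕ) :=
  (Finset.Icc 2 n).biUnion fun i => (Finset.Icc 1 (y i)).image fun h => s(h, i + h - 1)

/-- Negative edges of the prefix graph of `y[1..n]`. -/
def negEdges (y : ℕ → ℕ) (n : ℕ) : Finset (Sym2 ℕ) :=
  ((Finset.Icc 2 n).filter fun i => i + y i ≤ n).image fun i => s(1 + y i, i + y i)

/-- The positive subgraph `P⁺` of the prefix graph of `y[1..n]`, as a simple graph. -/
def Pplus (y : ℕ → ℕ) (n : ℕ) : SimpleGraph ℕ where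
  Adj a b := a ≠ b ∧ s(a, b) ∈ posEdges y n
  symm := by
    constructor; rintro a b ⟨h1, h2⟩
    exact ⟨h1.symm, by rwa [Sym2.eq_swap]⟩
  loopless := by constructor; rintro a ⟨h1, _⟩; exact h1 rfl

/-- If every negative edge of the prefix graph of a feasible array `y` joins vertices in
distinct connected components of `P⁺`, then the regular string assigning to each position
the (unique letter of the) connected component of `P⁺` containing it has prefix table `y`. -/
theorem componentString_isPrefixTable (n : ℕ) (y : ℕ → ℕ) (hy : Feasible y n)
    (hneg : ∀ i, 2 ≤ i → i ≤ n → i + y i ≤ n →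
      ¬ (Pplus y n).Reachable (1 + y i) (i + y i)) :
    IsPrefixTable
      (fun i => ({(Pplus y n).connectedComponentMk i} : Finset (Pplus y n).ConnectedComponent))
      n y := by
  intro i hi1 hin
  rcases Nat.lt_or_ge i 2 with h2 | h2
  · -- i = 1
    have hi : i = 1 := by omega
    subst hi
    constructor
    · refine ⟨by rw [hy.1]; omega, ?_⟩
      intro h hh
      exact ⟨(Pplus y n).connectedComponentMk (1 + h), by simp, by simp⟩
    · intro ℓ hℓ
      have := hℓ.1
      rw [hy.1]; omega
  · -- i ≥ 2
    have hadj : ∀ h, h < y i → ((Pplus y n).connectedComponentMk (1 + h)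
        = (Pplus y n).connectedComponentMk (i + h)) := by
      intro h hh
      apply SimpleGraph.ConnectedComponent.sound
      apply SimpleGraph.Adj.reachable
      refine ⟨by omega, ?_⟩
      simp only [posEdges, Finset.mem_biUnion, Finset.mem_image, Finset.mem_Icc]
      exact ⟨i, ⟨h2, hin⟩, h + 1, ⟨by omega, by omega⟩, by
        have : i + (h + 1) - 1 = i + h := by omega
        rw [Nat.add_comm 1 h, this]⟩
    constructor
    · refine ⟨?_, ?_⟩
      · have := hy.2 i h2 hin; omega
      · intro h hh
        exact ⟨(Pplus y n).connectedComponentMk (1 + h), by simp, by simp [hadj h hh]⟩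
    · intro ℓ hℓ
      by_contra hc
      push_neg at hc
      obtain ⟨a, ha1, ha2⟩ := hℓ.2 (y i) hc
      simp only [Finset.mem_singleton] at ha1 ha2
      have heq : (Pplus y n).connectedComponentMk (1 + y i)
          = (Pplus y n).connectedComponentMk (i + y i) := ha1 ▸ ha2
      have hle : i + y i ≤ n := by have := hℓ.1; omega
      exact hneg i h2 hin hle (SimpleGraph.ConnectedComponent.exact heq)
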